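/- arXiv:quant-ph/0501142 — 5 statements merged into one kernel-verified Lean document; each statement's English description precedes it below -/
import Mathlib

section
/- Every minimal sensitive block of a total Boolean function f on an input X has size at most the block sensitivity bs(f). -/
def flipSet {N : ℕ} (x : Fin N → Bool) (B : Finset (Fin N)) : Fin N → Bool :=
  fun i => if i ∈ B then !(x i) else x i

def SensitiveBlock {N : ℕ} (f : (Fin N → Bool) → Bool) (x : Fin N → Bool)
    (B : Finset (Fin N)) : Prop :=
  f (flipSet x B) ≠ f x

noncomputable def bsAt {N : ℕ} (f : (Fin N → Bool) → Bool) (x : Fin N → Bool) : ℕ :=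
  sSup {k | ∃ Bs : Finset (Finset (Fin N)), Bs.card = k ∧
    (∀ B ∈ Bs, SensitiveBlock f x B) ∧
    (Bs : Set (Finset (Fin N))).Pairwise (fun B B' => Disjoint B B')}

noncomputable def blockSens {N : ℕ} (f : (Fin N → Bool) → Bool) : ℕ :=
  sSup (Set.range (bsAt f))

noncomputable def sensAt {N : ℕ} (f : (Fin N → Bool) → Bool) (x : Fin N → Bool) : ℕ :=
  {i : Fin N | SensitiveBlock f x {i}}.ncard

noncomputable def sens {N : ℕ} (f : (Fin N → Bool) → Bool) : ℕ :=
  sSup (Set.range (sensAt f))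

def MinimalSensitiveBlock {N : ℕ} (f : (Fin N → Bool) → Bool) (x : Fin N → Bool)
    (B : Finset (Fin N)) : Prop :=
  SensitiveBlock f x B ∧ ∀ B' ⊂ B, ¬ SensitiveBlock f x B'

lemma bsAt_bound {N : ℕ} (f : (Fin N → Bool) → Bool) (x : Fin N → Bool) :
    ∀ k ∈ {k | ∃ Bs : Finset (Finset (Fin N)), Bs.card = k ∧
      (∀ B ∈ Bs, SensitiveBlock f x B) ∧
      (Bs : Set (Finset (Fin N))).Pairwise (fun B B' => Disjoint B B')}, k ≤ N := by
  rintro k ⟨Bs, rfl, hsens, hdisj⟩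
  have hne : ∀ B ∈ Bs, B.Nonempty := by
    intro B hBmem
    rcases Finset.eq_empty_or_nonempty B with h | h
    · exfalso; apply hsens B hBmem
      subst h
      have : flipSet x ∅ = x := funext fun i => by simp [flipSet]
      simp [SensitiveBlock, this]
    · exact h
  calc Bs.card = ∑ B ∈ Bs, 1 := by simp
    _ ≤ ∑ B ∈ Bs, B.card := Finset.sum_le_sum (fun B hBmem => (hne B hBmem).card_pos)
    _ = (Bs.biUnion id).card := (Finset.card_biUnion (fun a ha b hb hab => hdisj ha hb hab)).symm
    _ ≤ (Finset.univ : Finset (Fin N)).card := Finset.card_le_card (Finset.subset_univ _)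
    _ = N := by simp

lemma bsAt_le {N : ℕ} (f : (Fin N → Bool) → Bool) (x : Fin N → Bool) : bsAt f x ≤ N :=
  csSup_le ⟨0, ⟨∅, by simp⟩⟩ (bsAt_bound f x)

/-- Every minimal sensitive block has size at most the block sensitivity. -/
theorem stmt3 (N : ℕ) (f : (Fin N → Bool) → Bool) (X : Fin N → Bool) (B : Finset (Fin N))
    (hB : SensitiveBlock f X B) (hmin : ∀ B' ⊂ B, ¬ SensitiveBlock f X B') :
    B.card ≤ blockSens f := by
  set Y := flipSet X B with hY
  -- key: flipSet Y {i} = flipSet X (B \ {i}) for i ∈ B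
  have hflip : ∀ i ∈ B, flipSet Y {i} = flipSet X (B \ {i}) := by
    intro i hi
    funext j
    by_cases hj : j = i
    · subst hj
      simp [hY, flipSet, hi]
    · simp [hY, flipSet, hj, Finset.mem_sdiff]
  have hsens : ∀ i ∈ B, SensitiveBlock f Y {i} := by
    intro i hi
    have hsub : B \ {i} ⊂ B := by
      apply Finset.sdiff_ssubset (by simpa using hi) (by simp)
    have h1 : f (flipSet X (B \ {i})) = f X := by
      by_contra h; exact hmin _ hsub h
    rw [SensitiveBlock, hflip i hi, h1]
    exact fun h => hB h.symm
  -- the family of singletons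
  have hmem : B.card ∈ {k | ∃ Bs : Finset (Finset (Fin N)), Bs.card = k ∧
      (∀ B' ∈ Bs, SensitiveBlock f Y B') ∧
      (Bs : Set (Finset (Fin N))).Pairwise (fun B B' => Disjoint B B')} := by
    refine ⟨B.image (fun i => {i}), ?_, ?_, ?_⟩
    · rw [Finset.card_image_of_injective]
      intro a b hab; simpa using hab
    · intro B' hB'
      simp only [Finset.mem_image] at hB'
      obtain ⟨i, hi, rfl⟩ := hB'
      exact hsens i hi
    · intro a ha b hb hab
      simp only [Finset.coe_image, Set.mem_image, Finset.mem_coe] at ha hb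
      obtain ⟨i, _, rfl⟩ := ha
      obtain ⟨j, _, rfl⟩ := hb
      simp only [Finset.disjoint_singleton_left, Finset.mem_singleton]
      exact fun h => hab (by rw [h])
  have h1 : B.card ≤ bsAt f Y :=
    le_csSup ⟨N, bsAt_bound f Y⟩ hmem
  have h2 : bsAt f Y ≤ blockSens f := by
    apply le_csSup
    · exact ⟨N, by rintro _ ⟨x, rfl⟩; exact bsAt_le f x⟩
    · exact ⟨Y, rfl⟩
  exact h1.trans h2
end

section
/- Let p be a real multilinear polynomial in variables x_1,...,x_N that nondeterministically represents a total Boolean function f, i.e., for all x ∈ {0,1}^N, p(x) = 0 if and only if f(x) = 0. Then for every input w with f(w) = 0 and every maxonomial M of p (a monomial of p of maximal degree), there exists a set B of variables appearing in M such that f(w^B) = 1. -/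
def boolToReal (b : Bool) : ℝ := if b then 1 else 0

def Multilinear {N : ℕ} (p : MvPolynomial (Fin N) ℝ) : Prop :=
  ∀ m ∈ p.support, ∀ i, m i ≤ 1

/-- `p` nondeterministically represents `f`: it vanishes exactly on the zeros of `f`. -/
def NRepresents {N : ℕ} (p : MvPolynomial (Fin N) ℝ) (f : (Fin N → Bool) → Bool) : Prop :=
  ∀ x : Fin N → Bool, MvPolynomial.eval (fun i => boolToReal (x i)) p = 0 ↔ f x = false

/-- `p` exactly represents `f` on the Boolean cube. -/
def ERepresents {N : ℕ} (p : MvPolynomial (Fin N) ℝ) (f : (Fin N → Bool) → Bool) : Prop :=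
  ∀ x : Fin N → Bool, MvPolynomial.eval (fun i => boolToReal (x i)) p = boolToReal (f x)

/-- nondeterministic degree -/
noncomputable def ndeg {N : ℕ} (f : (Fin N → Bool) → Bool) : ℕ :=
  sInf {d | ∃ p : MvPolynomial (Fin N) ℝ, Multilinear p ∧ NRepresents p f ∧ p.totalDegree = d}

/-- Maxonomial lemma: if `p` nondeterministically represents `f`, `f w = 0`, and `M` is a
monomial of `p` of maximal degree, then flipping some subset of the variables of `M` in `w`
yields a `1`-input of `f`. -/
theorem stmt6 (N : ℕ) (f : (Fin N → Bool) → Bool) (p : MvPolynomial (Fin N) ℝ)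
    (hml : Multilinear p) (hrep : NRepresents p f)
    (w : Fin N → Bool) (hw : f w = false)
    (M : (Fin N) →₀ ℕ) (hM : M ∈ p.support)
    (hmax : (M.sum fun _ e => e) = p.totalDegree) :
    ∃ B ⊆ M.support, f (flipSet w B) = true := by
  classical
  by_contra hcon
  push_neg at hcon
  set S := M.support with hS
  set u : Fin N → ℝ := fun i => boolToReal (w i) with hu
  set v : Fin N → ℝ := fun i => boolToReal (!(w i)) with hv
  -- M is 1 on S
  have hM1 : ∀ i ∈ S, M i = 1 := fun i hi =>
    le_antisymm (hml M hM i) (Nat.one_le_iff_ne_zero.mpr (Finsupp.mem_support_iff.mp hi))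
  have hcard : S.card = p.totalDegree := by
    rw [← hmax, Finsupp.sum]
    rw [Finset.sum_congr rfl hM1]
    simp
  -- any other monomial vanishes somewhere on S
  have hvanish : ∀ m ∈ p.support, m ≠ M → ∃ i ∈ S, m i = 0 := by
    intro m hm hne
    by_contra hc
    push_neg at hc
    have hsub : S ⊆ m.support := fun i hi => Finsupp.mem_support_iff.mpr (hc i hi)
    have hm1 : ∀ i ∈ m.support, 1 ≤ m i := fun i hi =>
      Nat.one_le_iff_ne_zero.mpr (Finsupp.mem_support_iff.mp hi)
    have hsum : m.support.card ≤ m.sum fun _ e => e := by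
      rw [Finsupp.sum]
      calc m.support.card = ∑ _i ∈ m.support, 1 := by simp
        _ ≤ ∑ i ∈ m.support, m i := Finset.sum_le_sum hm1
    have hle : m.support.card ≤ S.card := by
      calc m.support.card ≤ m.sum fun _ e => e := hsum
        _ ≤ p.totalDegree := MvPolynomial.le_totalDegree hm
        _ = S.card := hcard.symm
    have heq : m.support = S := (Finset.eq_of_subset_of_card_le hsub hle).symm
    apply hne
    ext i
    by_cases hi : i ∈ S
    · rw [hM1 i hi]
      exact le_antisymm (hml m hm i) (hm1 i (heq ▸ hi))
    · have h1 : m i = 0 := Finsupp.notMem_support_iff.mp (heq ▸ hi)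
      have h2 : M i = 0 := Finsupp.notMem_support_iff.mp hi
      rw [h1, h2]
  -- all evaluations at flips vanish
  have hz : ∀ B ∈ S.powerset,
      MvPolynomial.eval (fun i => boolToReal (flipSet w B i)) p = 0 := by
    intro B hB
    rw [hrep]
    have := hcon B (Finset.mem_powerset.mp hB)
    simpa using this
  -- key alternating sum
  have hzero : ∑ B ∈ S.powerset, (∏ _i ∈ B, (-1 : ℝ)) *
      MvPolynomial.eval (fun i => boolToReal (flipSet w B i)) p = 0 := by
    apply Finset.sum_eq_zero
    intro B hB
    rw [hz B hB, mul_zero]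
  -- compute the alternating sum
  have hcompute : ∑ B ∈ S.powerset, (∏ _i ∈ B, (-1 : ℝ)) *
      MvPolynomial.eval (fun i => boolToReal (flipSet w B i)) p
      = MvPolynomial.coeff M p * ∏ i ∈ S, (u i - v i) := by
    have hx : ∀ B ∈ S.powerset, ∀ i, boolToReal (flipSet w B i) = if i ∈ B then v i else u i := by
      intro B hB i
      simp only [flipSet, hv, hu]
      by_cases h : i ∈ B <;> simp [h]
    calc ∑ B ∈ S.powerset, (∏ _i ∈ B, (-1 : ℝ)) *
          MvPolynomial.eval (fun i => boolToReal (flipSet w B i)) p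
        = ∑ B ∈ S.powerset, ∑ m ∈ p.support, MvPolynomial.coeff m p *
            (((∏ i ∈ B, (-(v i ^ m i))) * ∏ i ∈ S \ B, u i ^ m i) *
              ∏ i ∈ Sᶜ, u i ^ m i) := by
          apply Finset.sum_congr rfl
          intro B hB
          have hBS : B ⊆ S := Finset.mem_powerset.mp hB
          rw [MvPolynomial.eval_eq', Finset.mul_sum]
          apply Finset.sum_congr rfl
          intro m hm
          have hsplit : (∏ i, boolToReal (flipSet w B i) ^ m i) =
              (∏ i ∈ S, (if i ∈ B then v i else u i) ^ m i) * ∏ i ∈ Sᶜ, u i ^ m i := by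
            rw [← Finset.prod_mul_prod_compl S]
            congr 1
            · exact Finset.prod_congr rfl fun i hi => by rw [hx B hB i]
            · refine Finset.prod_congr rfl fun i hi => ?_
              rw [hx B hB i, if_neg (fun h => (Finset.mem_compl.mp hi) (hBS h))]
          have hSsplit : (∏ i ∈ S, (if i ∈ B then v i else u i) ^ m i) =
              (∏ i ∈ S \ B, u i ^ m i) * ∏ i ∈ B, v i ^ m i := by
            rw [← Finset.prod_sdiff hBS]
            congr 1
            · exact Finset.prod_congr rfl fun i hi => by
                rw [if_neg (Finset.mem_sdiff.mp hi).2]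
            · exact Finset.prod_congr rfl fun i hi => by rw [if_pos hi]
          have hneg : (∏ _i ∈ B, (-1 : ℝ)) * ∏ i ∈ B, v i ^ m i =
              ∏ i ∈ B, (-(v i ^ m i)) := by
            rw [← Finset.prod_mul_distrib]
            exact Finset.prod_congr rfl fun i _ => by ring
          rw [hsplit, hSsplit]
          rw [← hneg]
          ring
      _ = ∑ m ∈ p.support, MvPolynomial.coeff m p *
            ((∏ i ∈ S, (u i ^ m i - v i ^ m i)) * ∏ i ∈ Sᶜ, u i ^ m i) := by
          rw [Finset.sum_comm]
          apply Finset.sum_congr rfl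
          intro m hm
          have hpa : ∏ i ∈ S, (u i ^ m i - v i ^ m i) =
              ∑ B ∈ S.powerset, (∏ i ∈ B, -(v i ^ m i)) * ∏ i ∈ S \ B, u i ^ m i := by
            rw [← Finset.prod_add (fun i => -(v i ^ m i)) (fun i => u i ^ m i) S]
            exact Finset.prod_congr rfl fun i _ => by ring
          rw [hpa, Finset.sum_mul, Finset.mul_sum]
      _ = MvPolynomial.coeff M p * ∏ i ∈ S, (u i - v i) := by
          rw [Finset.sum_eq_single M]
          · congr 1
            have h1 : (∏ i ∈ S, (u i ^ M i - v i ^ M i)) = ∏ i ∈ S, (u i - v i) :=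
              Finset.prod_congr rfl fun i hi => by rw [hM1 i hi, pow_one, pow_one]
            have h2 : (∏ i ∈ Sᶜ, u i ^ M i) = 1 := by
              apply Finset.prod_eq_one
              intro i hi
              rw [Finsupp.notMem_support_iff.mp (Finset.mem_compl.mp hi), pow_zero]
            rw [h1, h2, mul_one]
          · intro m hm hne
            obtain ⟨i, hi, hmi⟩ := hvanish m hm hne
            have : (∏ i ∈ S, (u i ^ m i - v i ^ m i)) = 0 := by
              apply Finset.prod_eq_zero hi
              rw [hmi, pow_zero, pow_zero, sub_self]
            rw [this, zero_mul, mul_zero]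
          · intro h
            exact absurd hM h
  rw [hcompute] at hzero
  have hc0 : MvPolynomial.coeff M p ≠ 0 := MvPolynomial.mem_support_iff.mp hM
  have hp0 : ∏ i ∈ S, (u i - v i) ≠ 0 := by
    apply Finset.prod_ne_zero_iff.mpr
    intro i _
    simp only [hu, hv, boolToReal]
    cases w i <;> norm_num
  exact (mul_ne_zero hc0 hp0) hzero
end

section
/- For every total Boolean function f, the deterministic decision tree complexity satisfies D(f) ≤ (bs(f) + 1) · ndeg(f), where ndeg(f) is the minimal degree of a real polynomial p with p(x) = 0 iff f(x) = 0 for all Boolean x. -/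
inductive DTree (N : ℕ) : Type
  | leaf : Bool → DTree N
  | node : Fin N → DTree N → DTree N → DTree N

def DTree.eval {N : ℕ} : DTree N → (Fin N → Bool) → Bool
  | .leaf b, _ => b
  | .node i t0 t1, x => if x i then t1.eval x else t0.eval x

def DTree.depth {N : ℕ} : DTree N → ℕ
  | .leaf _ => 0
  | .node _ t0 t1 => 1 + max t0.depth t1.depth

def DTree.queries {N : ℕ} : DTree N → (Fin N → Bool) → Finset (Fin N)
  | .leaf _, _ => ∅
  | .node i t0 t1, x => insert i (if x i then t1.queries x else t0.queries x)

noncomputable def Dcomplexity {N : ℕ} (f : (Fin N → Bool) → Bool) : ℕ :=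
  sInf {d | ∃ T : DTree N, T.depth ≤ d ∧ ∀ x, T.eval x = f x}

open Finset

variable {ι : Type*} [DecidableEq ι]

lemma st8_sign (A : Finset ι) :
    ∑ U ∈ A.powerset, (-1 : ℝ) ^ U.card = if A = ∅ then 1 else 0 := by
  have h := Finset.sum_powerset_neg_one_pow_card (x := A)
  have h2 : ((∑ m ∈ A.powerset, (-1 : ℤ) ^ m.card : ℤ) : ℝ)
      = ∑ U ∈ A.powerset, (-1 : ℝ) ^ U.card := by push_cast; rfl
  rw [← h2, h]
  split <;> simp

lemma st8_sign_interval (T A : Finset ι) (hTA : T ⊆ A) :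
    ∑ S ∈ A.powerset.filter (fun S => T ⊆ S), (-1 : ℝ) ^ ((S \ T).card)
      = if T = A then 1 else 0 := by
  have h1 : ∑ S ∈ A.powerset.filter (fun S => T ⊆ S), (-1 : ℝ) ^ ((S \ T).card)
      = ∑ U ∈ (A \ T).powerset, (-1 : ℝ) ^ U.card := by
    refine Finset.sum_nbij' (fun S => S \ T) (fun U => T ∪ U) ?_ ?_ ?_ ?_ ?_
    · intro S hS
      simp only [mem_filter, mem_powerset] at hS
      exact mem_powerset.2 (sdiff_subset_sdiff hS.1 (Finset.Subset.refl T))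
    · intro U hU
      simp only [mem_powerset] at hU
      refine mem_filter.2 ⟨mem_powerset.2 (union_subset hTA (hU.trans sdiff_subset)),
        subset_union_left⟩
    · intro S hS
      simp only [mem_filter, mem_powerset] at hS
      exact Finset.union_sdiff_of_subset hS.2
    · intro U hU
      simp only [mem_powerset] at hU
      exact Finset.union_sdiff_cancel_left
        (Finset.disjoint_of_subset_right hU sdiff_disjoint.symm)
    · intro S hS; rfl
  rw [h1, st8_sign]
  have h3 : A \ T = ∅ ↔ T = A := by
    rw [Finset.sdiff_eq_empty_iff_subset]
    exact ⟨fun h => Finset.Subset.antisymm hTA h, fun h => h ▸ Finset.Subset.refl A⟩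
  simp only [h3]

lemma st8_split (A B : Finset ι) (hAB : Disjoint A B) (h : Finset ι → ℝ) :
    ∑ S ∈ (A ∪ B).powerset, h S = ∑ U ∈ A.powerset, ∑ V ∈ B.powerset, h (U ∪ V) := by
  rw [← Finset.sum_product']
  refine Finset.sum_nbij' (fun S => (S ∩ A, S ∩ B)) (fun P => P.1 ∪ P.2) ?_ ?_ ?_ ?_ ?_
  · intro S hS
    simp only [mem_powerset] at hS
    exact Finset.mem_product.2 ⟨mem_powerset.2 inter_subset_right, mem_powerset.2 inter_subset_right⟩
  · intro P hP
    simp only [Finset.mem_product, mem_powerset] at hP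
    exact mem_powerset.2 (union_subset_union hP.1 hP.2)
  · intro S hS
    simp only [mem_powerset] at hS
    show (S ∩ A) ∪ (S ∩ B) = S
    rw [← Finset.inter_union_distrib_left, Finset.inter_eq_left.2 hS]
  · intro P hP
    simp only [Finset.mem_product, mem_powerset] at hP
    have h1 : (P.1 ∪ P.2) ∩ A = P.1 := by
      ext i
      simp only [Finset.mem_inter, Finset.mem_union]
      constructor
      · rintro ⟨h | h, hA⟩
        · exact h
        · exact absurd hA (Finset.disjoint_left.1 hAB.symm (hP.2 h))
      · intro h; exact ⟨Or.inl h, hP.1 h⟩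
    have h2 : (P.1 ∪ P.2) ∩ B = P.2 := by
      ext i
      simp only [Finset.mem_inter, Finset.mem_union]
      constructor
      · rintro ⟨h | h, hB⟩
        · exact absurd hB (Finset.disjoint_left.1 hAB (hP.1 h))
        · exact h
      · intro h; exact ⟨Or.inr h, hP.2 h⟩
    show (_ ∩ A, _ ∩ B) = P
    rw [h1, h2]
  · intro S hS
    simp only [mem_powerset] at hS
    show h S = h ((S ∩ A) ∪ (S ∩ B))
    rw [← Finset.inter_union_distrib_left, Finset.inter_eq_left.2 hS]

lemma st8_swap (A : Finset ι) (F : Finset ι → Finset ι → ℝ) :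
    ∑ S ∈ A.powerset, ∑ T ∈ S.powerset, F S T
      = ∑ T ∈ A.powerset, ∑ S ∈ A.powerset.filter (fun S => T ⊆ S), F S T := by
  refine Finset.sum_comm' ?_
  intro S T
  simp only [mem_powerset, mem_filter]
  constructor
  · rintro ⟨h1, h2⟩; exact ⟨⟨h1, h2⟩, h2.trans h1⟩
  · rintro ⟨⟨h1, h2⟩, h3⟩; exact ⟨h1, h2⟩

lemma st8_inversion (g : Finset ι → ℝ) (A : Finset ι) :
    ∑ S ∈ A.powerset, ∑ T ∈ S.powerset, (-1 : ℝ) ^ ((S \ T).card) * g T = g A := by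
  rw [st8_swap]
  have h1 : ∀ T ∈ A.powerset,
      ∑ S ∈ A.powerset.filter (fun S => T ⊆ S), (-1 : ℝ) ^ ((S \ T).card) * g T
        = (if T = A then 1 else 0) * g T := by
    intro T hT
    rw [← Finset.sum_mul, st8_sign_interval T A (mem_powerset.1 hT)]
  rw [Finset.sum_congr rfl h1]
  rw [Finset.sum_eq_single_of_mem A (Finset.mem_powerset_self A)
    (fun T _ hne => by rw [if_neg hne, zero_mul])]
  rw [if_pos rfl, one_mul]

lemma st8_maxid (q : Finset ι → ℝ) (A M : Finset ι) :
    ∑ W ∈ M.powerset, (-1 : ℝ) ^ ((M \ W).card) * (∑ S ∈ ((A \ M) ∪ W).powerset, q S)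
      = ∑ U ∈ (A \ M).powerset, q (M ∪ U) := by
  have h1 : ∀ W ∈ M.powerset, (-1 : ℝ) ^ ((M \ W).card) * (∑ S ∈ ((A \ M) ∪ W).powerset, q S)
      = ∑ U ∈ (A \ M).powerset, ∑ V ∈ W.powerset, (-1 : ℝ) ^ ((M \ W).card) * q (U ∪ V) := by
    intro W hW
    rw [st8_split (A \ M) W
      (Finset.disjoint_of_subset_right (mem_powerset.1 hW) sdiff_disjoint) q, Finset.mul_sum]
    exact Finset.sum_congr rfl fun U _ => Finset.mul_sum _ _ _
  rw [Finset.sum_congr rfl h1, Finset.sum_comm]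
  refine Finset.sum_congr rfl ?_
  intro U hU
  rw [st8_swap M (fun W V => (-1 : ℝ) ^ ((M \ W).card) * q (U ∪ V))]
  have h2 : ∀ V ∈ M.powerset,
      ∑ W ∈ M.powerset.filter (fun W => V ⊆ W), (-1 : ℝ) ^ ((M \ W).card) * q (U ∪ V)
        = (if V = M then 1 else 0) * q (U ∪ V) := by
    intro V hV
    have hVM := mem_powerset.1 hV
    rw [← Finset.sum_mul]
    congr 1
    have e1 : ∀ W ∈ M.powerset.filter (fun W => V ⊆ W),
        (-1 : ℝ) ^ ((M \ W).card) = (-1 : ℝ) ^ ((M \ V).card) * (-1 : ℝ) ^ ((W \ V).card) := by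
      intro W hW
      simp only [mem_filter, mem_powerset] at hW
      have hcard : (M \ V).card = (M \ W).card + (W \ V).card := by
        rw [← Finset.card_union_of_disjoint (by
          rw [Finset.disjoint_left]
          intro i hi1 hi2
          exact (Finset.mem_sdiff.1 hi1).2 (Finset.mem_sdiff.1 hi2).1)]
        congr 1
        ext i
        simp only [Finset.mem_sdiff, Finset.mem_union]
        constructor
        · rintro ⟨hiM, hiV⟩
          by_cases hw : i ∈ W
          · exact Or.inr ⟨hw, hiV⟩
          · exact Or.inl ⟨hiM, hw⟩
        · rintro (⟨hiM, hiW⟩ | ⟨hiW, hiV⟩)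
          · exact ⟨hiM, fun hv => hiW (hW.2 hv)⟩
          · exact ⟨hW.1 hiW, hiV⟩
      rw [hcard, pow_add, mul_assoc, ← mul_pow]
      norm_num
    rw [Finset.sum_congr rfl e1, ← Finset.mul_sum, st8_sign_interval V M hVM]
    by_cases h : V = M
    · subst h; simp
    · simp [h]
  rw [Finset.sum_congr rfl h2]
  rw [Finset.sum_eq_single_of_mem M (Finset.mem_powerset_self M)
    (fun V _ hne => by rw [if_neg hne, zero_mul])]
  rw [if_pos rfl, one_mul, Finset.union_comm]

section Main

variable {N : ℕ}

def st8ones (x : Fin N → Bool) : Finset (Fin N) := Finset.univ.filter (fun i => x i = true)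

lemma st8_mem_ones {x : Fin N → Bool} {i : Fin N} : i ∈ st8ones x ↔ x i = true := by
  simp [st8ones]

noncomputable def st8E (q : Finset (Fin N) → ℝ) (x : Fin N → Bool) : ℝ :=
  ∑ S ∈ (st8ones x).powerset, q S

noncomputable def st8qr (q : Finset (Fin N) → ℝ) (F : Finset (Fin N)) (σ : Fin N → Bool)
    (S : Finset (Fin N)) : ℝ :=
  ∑ T ∈ (F.filter (fun i => σ i = true)).powerset, q (S ∪ T)

lemma st8E_restrict (q : Finset (Fin N) → ℝ) (F : Finset (Fin N)) (σ : Fin N → Bool)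
    (y : Fin N → Bool) (hy : ∀ i ∈ F, y i = σ i) :
    st8E q y = ∑ U ∈ ((st8ones y) \ F).powerset, st8qr q F σ U := by
  have hsplit : st8ones y = ((st8ones y) \ F) ∪ ((st8ones y) ∩ F) :=
    (Finset.sdiff_union_inter _ _).symm
  have hdisj : Disjoint ((st8ones y) \ F) ((st8ones y) ∩ F) :=
    Finset.disjoint_of_subset_right Finset.inter_subset_right Finset.sdiff_disjoint
  rw [st8E]
  rw [show (st8ones y).powerset = ((st8ones y \ F) ∪ ((st8ones y) ∩ F)).powerset from by
    rw [Finset.sdiff_union_inter]]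
  rw [st8_split _ _ hdisj]
  refine Finset.sum_congr rfl fun U _ => ?_
  rw [st8qr]
  have : (st8ones y) ∩ F = F.filter (fun i => σ i = true) := by
    ext i
    simp only [Finset.mem_inter, Finset.mem_filter, st8_mem_ones]
    constructor
    · rintro ⟨h1, h2⟩; exact ⟨h2, (hy i h2) ▸ h1⟩
    · rintro ⟨h1, h2⟩; exact ⟨(hy i h1).trans h2, h1⟩
  rw [this]

lemma st8_flip_empty (x : Fin N → Bool) : flipSet x ∅ = x := by
  funext i; simp [flipSet]

lemma st8_block_nonempty {f : (Fin N → Bool) → Bool} {z : Fin N → Bool} {B : Finset (Fin N)}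
    (h : SensitiveBlock f z B) : B.Nonempty := by
  rcases B.eq_empty_or_nonempty with h0 | h0
  · exact absurd (by rw [h0, st8_flip_empty]) h
  · exact h0

lemma st8_sens (f : (Fin N → Bool) → Bool) (q : Finset (Fin N) → ℝ)
    (hrep : ∀ x, st8E q x = 0 ↔ f x = false)
    (F : Finset (Fin N)) (σ : Fin N → Bool) (M : Finset (Fin N))
    (hMF : Disjoint M F) (hM0 : st8qr q F σ M ≠ 0)
    (hMmax : ∀ S, Disjoint S F → st8qr q F σ S ≠ 0 → S.card ≤ M.card)
    (z : Fin N → Bool) (hz : ∀ i ∈ F, z i = σ i) (hfz : f z = false) :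
    ∃ B : Finset (Fin N), B ⊆ M ∧ SensitiveBlock f z B := by
  classical
  set A := st8ones z \ F with hA
  have hAF : Disjoint A F := Finset.sdiff_disjoint
  have hsum : ∑ W ∈ M.powerset,
      (-1 : ℝ) ^ ((M \ W).card) * (∑ S ∈ ((A \ M) ∪ W).powerset, st8qr q F σ S)
        = st8qr q F σ M := by
    rw [st8_maxid]
    rw [Finset.sum_eq_single_of_mem ∅ (Finset.empty_mem_powerset _) ?_]
    · rw [Finset.union_empty]
    · intro U hU hUne
      by_contra hq0
      have hUM : Disjoint M U :=
        (Finset.disjoint_of_subset_left (Finset.mem_powerset.1 hU) Finset.sdiff_disjoint).symm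
      have hUF : Disjoint U F :=
        Finset.disjoint_of_subset_left ((Finset.mem_powerset.1 hU).trans Finset.sdiff_subset) hAF
      have hle := hMmax (M ∪ U) (Finset.disjoint_union_left.2 ⟨hMF, hUF⟩) hq0
      rw [Finset.card_union_of_disjoint hUM] at hle
      have : 0 < U.card := Finset.card_pos.2 (Finset.nonempty_iff_ne_empty.2 hUne)
      omega
  have hex : ∃ W ∈ M.powerset,
      (-1 : ℝ) ^ ((M \ W).card) * (∑ S ∈ ((A \ M) ∪ W).powerset, st8qr q F σ S) ≠ 0 := by
    by_contra hall
    push_neg at hall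
    rw [Finset.sum_eq_zero hall] at hsum
    exact hM0 hsum.symm
  obtain ⟨W, hWM, hWne⟩ := hex
  have hWM' := Finset.mem_powerset.1 hWM
  have hinner : (∑ S ∈ ((A \ M) ∪ W).powerset, st8qr q F σ S) ≠ 0 :=
    right_ne_zero_of_mul hWne
  set zW : Fin N → Bool := fun i => if i ∈ M then decide (i ∈ W) else z i with hzWdef
  have hzW : ∀ i ∈ F, zW i = σ i := by
    intro i hiF
    have hiM : i ∉ M := fun hm => (Finset.disjoint_left.1 hMF hm) hiF
    simp only [hzWdef, if_neg hiM]
    exact hz i hiF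
  have hones : st8ones zW \ F = (A \ M) ∪ W := by
    ext i
    simp only [Finset.mem_sdiff, Finset.mem_union, st8_mem_ones, hA]
    by_cases hiM : i ∈ M
    · have hiF : i ∉ F := Finset.disjoint_left.1 hMF hiM
      have hzi : zW i = decide (i ∈ W) := by simp [hzWdef, hiM]
      simp [hzi, hiF, hiM]
    · have hiW : i ∉ W := fun hw => hiM (hWM' hw)
      have hzi : zW i = z i := by simp [hzWdef, hiM]
      simp only [hzi]
      constructor
      · rintro ⟨h1, h2⟩; exact Or.inl ⟨⟨h1, h2⟩, hiM⟩
      · rintro (⟨⟨h1, h2⟩, _⟩ | hw)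
        · exact ⟨h1, h2⟩
        · exact absurd hw hiW
  have hEzW : st8E q zW ≠ 0 := by
    rw [st8E_restrict q F σ zW hzW, hones]
    exact hinner
  have hfzW : f zW = true := by
    rcases Bool.eq_false_or_eq_true (f zW) with h | h
    · exact h
    · exact absurd ((hrep zW).2 h) hEzW
  refine ⟨M.filter (fun i => decide (i ∈ W) ≠ z i), Finset.filter_subset _ _, ?_⟩
  have hflip : flipSet z (M.filter (fun i => decide (i ∈ W) ≠ z i)) = zW := by
    funext i
    simp only [flipSet, hzWdef, Finset.mem_filter]
    by_cases hiM : i ∈ M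
    · by_cases hne : decide (i ∈ W) ≠ z i
      · rw [if_pos ⟨hiM, hne⟩, if_pos hiM]
        rcases Bool.eq_false_or_eq_true (z i) with h | h <;> simp [h] at hne ⊢ <;> exact hne
      · push_neg at hne
        rw [if_neg (by simp [hne]), if_pos hiM, hne]
    · rw [if_neg (by simp [hiM]), if_neg hiM]
  rw [SensitiveBlock, hflip, hfzW, hfz]
  simp

end Main

section Tree

variable {N : ℕ}

def st8query : List (Fin N) → (Fin N → Bool) → ((Fin N → Bool) → DTree N) → DTree N
  | [], σ, k => k σ
  | i :: l, σ, k =>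
      .node i (st8query l (Function.update σ i false) k) (st8query l (Function.update σ i true) k)

lemma st8query_depth (l : List (Fin N)) (k : (Fin N → Bool) → DTree N) (D : ℕ)
    (hk : ∀ τ, (k τ).depth ≤ D) : ∀ σ, (st8query l σ k).depth ≤ l.length + D := by
  induction l with
  | nil => intro σ; simpa [st8query] using hk σ
  | cons i l ih =>
    intro σ
    have h0 := ih (Function.update σ i false)
    have h1 := ih (Function.update σ i true)
    have hm := max_le h0 h1
    simp only [st8query, DTree.depth, List.length_cons]
    omega

lemma st8query_eval (l : List (Fin N)) (k : (Fin N → Bool) → DTree N) (x : Fin N → Bool) :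
    ∀ σ, (st8query l σ k).eval x = (k (fun j => if j ∈ l then x j else σ j)).eval x := by
  induction l with
  | nil =>
    intro σ
    have h : (fun j => if j ∈ ([] : List (Fin N)) then x j else σ j) = σ := by
      funext j; simp
    rw [st8query, h]
  | cons i l ih =>
    intro σ
    have key : ∀ b : Bool, x i = b →
        (fun j => if j ∈ l then x j else Function.update σ i b j)
          = (fun j => if j ∈ i :: l then x j else σ j) := by
      intro b hb
      funext j
      by_cases hjl : j ∈ l
      · simp [hjl, List.mem_cons]
      · by_cases hji : j = i
        · subst hji
          simp [hjl, Function.update_self, hb]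
        · simp [hjl, hji, Function.update_of_ne hji]
    rcases Bool.eq_false_or_eq_true (x i) with hxi | hxi
    · rw [st8query]
      simp only [DTree.eval, hxi, if_true]
      rw [ih, key true hxi]
    · rw [st8query]
      simp only [DTree.eval, hxi, Bool.false_eq_true, if_false]
      rw [ih, key false hxi]

end Tree

section Build

variable {N : ℕ}

lemma st8_zero_tree (f : (Fin N → Bool) → Bool) (q : Finset (Fin N) → ℝ)
    (hrep : ∀ x, st8E q x = 0 ↔ f x = false) (F : Finset (Fin N)) (σ : Fin N → Bool)
    (hZ : ∀ S, Disjoint S F → st8qr q F σ S = 0) (x : Fin N → Bool)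
    (hx : ∀ i ∈ F, x i = σ i) : f x = false := by
  apply (hrep x).1
  rw [st8E_restrict q F σ x hx]
  refine Finset.sum_eq_zero fun U hU => ?_
  exact hZ U (Finset.disjoint_of_subset_left (Finset.mem_powerset.1 hU) Finset.sdiff_disjoint)

lemma st8_build (f : (Fin N → Bool) → Bool) (d : ℕ) (q : Finset (Fin N) → ℝ)
    (hq : ∀ S, q S ≠ 0 → S.card ≤ d)
    (hrep : ∀ x, st8E q x = 0 ↔ f x = false) :
    ∀ (c : ℕ) (F : Finset (Fin N)) (σ : Fin N → Bool),
      (∀ z, (∀ i ∈ F, z i = σ i) → f z = false →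
        ∀ Bs : Finset (Finset (Fin N)), (∀ B ∈ Bs, SensitiveBlock f z B) →
          (∀ B ∈ Bs, Disjoint B F) →
          (Bs : Set (Finset (Fin N))).Pairwise (fun B B' => Disjoint B B') →
          Bs.card ≤ c) →
      ∃ T : DTree N, T.depth ≤ c * d ∧ ∀ x, (∀ i ∈ F, x i = σ i) → T.eval x = f x := by
  intro c
  induction c with
  | zero =>
    intro F σ hinv
    classical
    by_cases hZ : ∀ S, Disjoint S F → st8qr q F σ S = 0
    · exact ⟨DTree.leaf false, Nat.zero_le _,
        fun x hx => (st8_zero_tree f q hrep F σ hZ x hx).symm⟩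
    · push_neg at hZ
      obtain ⟨S₀, hS₀F, hS₀⟩ := hZ
      set cand := Finset.univ.filter (fun S => Disjoint S F ∧ st8qr q F σ S ≠ 0) with hcand
      have hcand_ne : cand.Nonempty :=
        ⟨S₀, Finset.mem_filter.2 ⟨Finset.mem_univ _, hS₀F, hS₀⟩⟩
      obtain ⟨M, hMmem, hMmax⟩ := Finset.exists_max_image cand Finset.card hcand_ne
      rw [hcand, Finset.mem_filter] at hMmem
      obtain ⟨-, hMF, hM0⟩ := hMmem
      have hMmax' : ∀ S, Disjoint S F → st8qr q F σ S ≠ 0 → S.card ≤ M.card := fun S h1 h2 =>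
        hMmax S (Finset.mem_filter.2 ⟨Finset.mem_univ _, h1, h2⟩)
      refine ⟨DTree.leaf true, Nat.zero_le _, fun x hx => ?_⟩
      rcases Bool.eq_false_or_eq_true (f x) with hfx | hfx
      · exact hfx.symm
      · exfalso
        obtain ⟨B, hBM, hBsens⟩ := st8_sens f q hrep F σ M hMF hM0 hMmax' x hx hfx
        have h1 := hinv x hx hfx {B} (fun B' hB' => by
            rw [Finset.mem_singleton] at hB'; exact hB' ▸ hBsens)
          (fun B' hB' => by
            rw [Finset.mem_singleton] at hB'
            exact hB' ▸ Finset.disjoint_of_subset_left hBM hMF)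
          (by rw [Finset.coe_singleton]; exact Set.pairwise_singleton _ _)
        simp at h1
  | succ c ih =>
    intro F σ hinv
    classical
    by_cases hZ : ∀ S, Disjoint S F → st8qr q F σ S = 0
    · exact ⟨DTree.leaf false, Nat.zero_le _,
        fun x hx => (st8_zero_tree f q hrep F σ hZ x hx).symm⟩
    · push_neg at hZ
      obtain ⟨S₀, hS₀F, hS₀⟩ := hZ
      set cand := Finset.univ.filter (fun S => Disjoint S F ∧ st8qr q F σ S ≠ 0) with hcand
      have hcand_ne : cand.Nonempty :=
        ⟨S₀, Finset.mem_filter.2 ⟨Finset.mem_univ _, hS₀F, hS₀⟩⟩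
      obtain ⟨M, hMmem, hMmax⟩ := Finset.exists_max_image cand Finset.card hcand_ne
      rw [hcand, Finset.mem_filter] at hMmem
      obtain ⟨-, hMF, hM0⟩ := hMmem
      have hMmax' : ∀ S, Disjoint S F → st8qr q F σ S ≠ 0 → S.card ≤ M.card := fun S h1 h2 =>
        hMmax S (Finset.mem_filter.2 ⟨Finset.mem_univ _, h1, h2⟩)
      have hMd : M.card ≤ d := by
        obtain ⟨T, _, hT⟩ := Finset.exists_ne_zero_of_sum_ne_zero hM0
        exact le_trans (Finset.card_le_card Finset.subset_union_left) (hq _ hT)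
      have hstep : ∀ τ : Fin N → Bool, ∃ T : DTree N, T.depth ≤ c * d ∧
          ((∀ i ∈ F, τ i = σ i) → ∀ x, (∀ i ∈ F ∪ M, x i = τ i) → T.eval x = f x) := by
        intro τ
        by_cases hτ : ∀ i ∈ F, τ i = σ i
        · have hinv' : ∀ z, (∀ i ∈ F ∪ M, z i = τ i) → f z = false →
              ∀ Bs : Finset (Finset (Fin N)), (∀ B ∈ Bs, SensitiveBlock f z B) →
                (∀ B ∈ Bs, Disjoint B (F ∪ M)) →
                (Bs : Set (Finset (Fin N))).Pairwise (fun B B' => Disjoint B B') →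
                Bs.card ≤ c := by
            intro z hzcons hfz Bs hsens hdisjF hpair
            have hzF : ∀ i ∈ F, z i = σ i := fun i hi =>
              (hzcons i (Finset.mem_union_left M hi)).trans (hτ i hi)
            obtain ⟨B, hBM, hBsens⟩ := st8_sens f q hrep F σ M hMF hM0 hMmax' z hzF hfz
            have hBne := st8_block_nonempty hBsens
            have hBnotin : B ∉ Bs := by
              intro hBin
              have hdj : Disjoint B M := (Finset.disjoint_union_right.1 (hdisjF B hBin)).2
              obtain ⟨i, hi⟩ := hBne
              exact (Finset.disjoint_left.1 hdj hi) (hBM hi)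
            have hcard : (insert B Bs).card = Bs.card + 1 :=
              Finset.card_insert_of_notMem hBnotin
            have hBdisj : ∀ B' ∈ Bs, Disjoint B B' := fun B' hB' =>
              Finset.disjoint_of_subset_left hBM
                ((Finset.disjoint_union_right.1 (hdisjF B' hB')).2).symm
            have h1 := hinv z hzF hfz (insert B Bs)
              (fun B' hB' => by
                rcases Finset.mem_insert.1 hB' with h | h
                · exact h ▸ hBsens
                · exact hsens B' h)
              (fun B' hB' => by
                rcases Finset.mem_insert.1 hB' with h | h
                · exact h ▸ Finset.disjoint_of_subset_left hBM hMF
                · exact (Finset.disjoint_union_right.1 (hdisjF B' h)).1)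
              (by
                rw [Finset.coe_insert]
                exact hpair.insert (fun B' hB' _ => ⟨hBdisj B' hB', (hBdisj B' hB').symm⟩))
            omega
          obtain ⟨T, hT1, hT2⟩ := ih (F ∪ M) τ hinv'
          exact ⟨T, hT1, fun _ => hT2⟩
        · exact ⟨DTree.leaf true, Nat.zero_le _, fun hcontra => absurd hcontra hτ⟩
      choose k hk1 hk2 using hstep
      refine ⟨st8query M.toList σ k, ?_, ?_⟩
      · have h := st8query_depth M.toList k (c * d) hk1 σ
        rw [Finset.length_toList] at h
        rw [Nat.succ_mul]
        omega
      · intro x hx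
        rw [st8query_eval]
        refine hk2 _ ?_ x ?_
        · intro i hi
          have hiM : i ∉ M := fun hm => (Finset.disjoint_left.1 hMF hm) hi
          simp only [Finset.mem_toList, if_neg hiM]
        · intro i hi
          rcases Finset.mem_union.1 hi with h | h
          · have hiM : i ∉ M := fun hm => (Finset.disjoint_left.1 hMF hm) h
            simp only [Finset.mem_toList, if_neg hiM]
            exact hx i h
          · simp only [Finset.mem_toList, if_pos h]

end Build

section Poly

variable {N : ℕ}

def st8ind (S : Finset (Fin N)) : Fin N →₀ ℕ :=
  ⟨S, fun i => if i ∈ S then 1 else 0, by intro a; by_cases h : a ∈ S <;> simp [h]⟩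

lemma st8ind_apply (S : Finset (Fin N)) (i : Fin N) : st8ind S i = if i ∈ S then 1 else 0 := rfl

lemma st8ind_support (S : Finset (Fin N)) : (st8ind S).support = S := rfl

lemma st8ind_inj : Function.Injective (st8ind (N := N)) := fun S T h => by
  have := congrArg Finsupp.support h
  rwa [st8ind_support, st8ind_support] at this

lemma st8ind_sum (S : Finset (Fin N)) : (st8ind S).sum (fun _ e => e) = S.card := by
  rw [Finsupp.sum, st8ind_support]
  rw [Finset.sum_congr rfl (fun i hi => by rw [st8ind_apply, if_pos hi])]
  simp

lemma st8_multilinear_eq (p : MvPolynomial (Fin N) ℝ) (hml : Multilinear p)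
    {m : Fin N →₀ ℕ} (hm : m ∈ p.support) : m = st8ind m.support := by
  ext i
  rw [st8ind_apply]
  by_cases h : i ∈ m.support
  · rw [if_pos h]
    have h1 : m i ≠ 0 := Finsupp.mem_support_iff.1 h
    have h2 : m i ≤ 1 := hml m hm i
    omega
  · rw [if_neg h]
    exact Finsupp.notMem_support_iff.1 h

lemma st8_prod_pow (x : Fin N → Bool) (S : Finset (Fin N)) :
    ∏ i ∈ S, boolToReal (x i) = if S ∈ (st8ones x).powerset then 1 else 0 := by
  by_cases h : S ⊆ st8ones x
  · rw [if_pos (Finset.mem_powerset.2 h)]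
    refine Finset.prod_eq_one fun i hi => ?_
    have : x i = true := st8_mem_ones.1 (h hi)
    simp [boolToReal, this]
  · rw [if_neg (fun hc => h (Finset.mem_powerset.1 hc))]
    obtain ⟨i, hiS, hnot⟩ := Finset.not_subset.1 h
    refine Finset.prod_eq_zero hiS ?_
    have : x i = false := by
      rcases Bool.eq_false_or_eq_true (x i) with h1 | h1
      · exact absurd (st8_mem_ones.2 h1) hnot
      · exact h1
    simp [boolToReal, this]

lemma st8_pow_ind (x : Fin N → Bool) (S : Finset (Fin N)) :
    ∏ i, boolToReal (x i) ^ (st8ind S i) = if S ∈ (st8ones x).powerset then 1 else 0 := by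
  rw [← st8_prod_pow]
  have h1 : ∏ i ∈ S, boolToReal (x i)
      = ∏ i ∈ Finset.univ, (if i ∈ S then boolToReal (x i) else 1) := by
    rw [Finset.prod_ite_mem, Finset.univ_inter]
  rw [h1]
  refine (Finset.prod_congr rfl fun i _ => ?_).symm
  rw [st8ind_apply]
  by_cases h : i ∈ S <;> simp [h]

lemma st8_sum_ite_powerset (g : Finset (Fin N) → ℝ) (A : Finset (Fin N)) :
    ∑ S ∈ Finset.univ, g S * (if S ∈ A.powerset then 1 else 0) = ∑ S ∈ A.powerset, g S := by
  rw [Finset.sum_congr rfl (fun S _ => by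
    rw [mul_ite, mul_one, mul_zero])]
  rw [← Finset.sum_filter]
  congr 1
  ext S
  simp

lemma st8_eval_as_E (p : MvPolynomial (Fin N) ℝ) (hml : Multilinear p) (x : Fin N → Bool) :
    MvPolynomial.eval (fun i => boolToReal (x i)) p
      = st8E (fun S => p.coeff (st8ind S)) x := by
  rw [MvPolynomial.eval_eq']
  have hsub : p.support ⊆ Finset.univ.image st8ind := fun m hm =>
    Finset.mem_image.2 ⟨m.support, Finset.mem_univ _, (st8_multilinear_eq p hml hm).symm⟩
  rw [Finset.sum_subset hsub (fun m _ hm => by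
    rw [MvPolynomial.notMem_support_iff.1 hm, zero_mul])]
  rw [Finset.sum_image (fun S _ T _ h => st8ind_inj h)]
  rw [Finset.sum_congr rfl (fun S _ => by rw [st8_pow_ind])]
  rw [st8_sum_ite_powerset]
  rfl

lemma st8_coeff_card (p : MvPolynomial (Fin N) ℝ) {S : Finset (Fin N)}
    (h : p.coeff (st8ind S) ≠ 0) : S.card ≤ p.totalDegree := by
  have := MvPolynomial.le_totalDegree (MvPolynomial.mem_support_iff.2 h)
  rwa [st8ind_sum] at this

noncomputable def st8q0 (f : (Fin N → Bool) → Bool) : Finset (Fin N) → ℝ := fun S =>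
  ∑ T ∈ S.powerset, (-1 : ℝ) ^ ((S \ T).card) * boolToReal (f (fun i => decide (i ∈ T)))

noncomputable def st8p0 (f : (Fin N → Bool) → Bool) : MvPolynomial (Fin N) ℝ :=
  ∑ S ∈ Finset.univ, MvPolynomial.monomial (st8ind S) (st8q0 f S)

lemma st8p0_ml (f : (Fin N → Bool) → Bool) : Multilinear (st8p0 f) := by
  intro m hm i
  classical
  have h1 := MvPolynomial.support_sum hm
  obtain ⟨S, -, hmS⟩ := Finset.mem_biUnion.1 h1
  rw [MvPolynomial.support_monomial] at hmS
  split at hmS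
  · exact absurd hmS (Finset.notMem_empty m)
  · rw [Finset.mem_singleton.1 hmS, st8ind_apply]
    by_cases h : i ∈ S <;> simp [h]

lemma st8p0_rep (f : (Fin N → Bool) → Bool) (x : Fin N → Bool) :
    MvPolynomial.eval (fun i => boolToReal (x i)) (st8p0 f) = boolToReal (f x) := by
  rw [st8p0, map_sum]
  have hterm : ∀ S : Finset (Fin N),
      MvPolynomial.eval (fun i => boolToReal (x i)) (MvPolynomial.monomial (st8ind S) (st8q0 f S))
        = st8q0 f S * (if S ∈ (st8ones x).powerset then 1 else 0) := by
    intro S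
    rw [MvPolynomial.eval_monomial, ← st8_pow_ind x S]
    congr 1
    rw [Finsupp.prod, st8ind_support]
    exact (Finset.prod_subset (Finset.subset_univ S)
      (fun i _ hi => by rw [st8ind_apply, if_neg hi, pow_zero]))
  rw [Finset.sum_congr rfl (fun S _ => hterm S), st8_sum_ite_powerset]
  have hinv := st8_inversion (fun T => boolToReal (f (fun i => decide (i ∈ T)))) (st8ones x)
  rw [show (∑ S ∈ (st8ones x).powerset, st8q0 f S)
    = ∑ S ∈ (st8ones x).powerset, ∑ T ∈ S.powerset,
        (-1 : ℝ) ^ ((S \ T).card) * boolToReal (f (fun i => decide (i ∈ T))) from rfl]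
  rw [hinv]
  congr 2
  funext i
  simp [st8_mem_ones]

end Poly

/-- `D(f) ≤ (bs(f) + 1) * ndeg(f)` for every total Boolean function. -/
theorem stmt8 (N : ℕ) (f : (Fin N → Bool) → Bool) :
    Dcomplexity f ≤ (blockSens f + 1) * ndeg f := by
  classical
  have hml := st8p0_ml f
  have hnr0 : NRepresents (st8p0 f) f := by
    intro x
    rw [st8p0_rep f x]
    cases h : f x <;> simp [boolToReal, h]
  have hne : {d | ∃ p : MvPolynomial (Fin N) ℝ,
      Multilinear p ∧ NRepresents p f ∧ p.totalDegree = d}.Nonempty :=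
    ⟨(st8p0 f).totalDegree, st8p0 f, hml, hnr0, rfl⟩
  have hmem : ndeg f ∈ {d | ∃ p : MvPolynomial (Fin N) ℝ,
      Multilinear p ∧ NRepresents p f ∧ p.totalDegree = d} := Nat.sInf_mem hne
  obtain ⟨p, hpml, hpnr, hpdeg⟩ := hmem
  have hq : ∀ S : Finset (Fin N), p.coeff (st8ind S) ≠ 0 → S.card ≤ ndeg f :=
    fun S h => hpdeg ▸ st8_coeff_card p h
  have hrepE : ∀ x, st8E (fun S => p.coeff (st8ind S)) x = 0 ↔ f x = false := fun x => by
    rw [← st8_eval_as_E p hpml x]; exact hpnr x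
  have hbddAt : ∀ z : Fin N → Bool, BddAbove {k | ∃ Bs : Finset (Finset (Fin N)),
      Bs.card = k ∧ (∀ B ∈ Bs, SensitiveBlock f z B) ∧
      (Bs : Set (Finset (Fin N))).Pairwise (fun B B' => Disjoint B B')} := by
    intro z
    refine ⟨(Finset.univ : Finset (Finset (Fin N))).card, ?_⟩
    rintro k ⟨Bs, rfl, -, -⟩
    exact Finset.card_le_univ Bs
  have hbddR : BddAbove (Set.range (bsAt f)) := by
    refine ⟨(Finset.univ : Finset (Finset (Fin N))).card, ?_⟩
    rintro _ ⟨y, rfl⟩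
    refine csSup_le ⟨0, ∅, by simp, fun B h => absurd h (Finset.notMem_empty B), by simp⟩ ?_
    rintro k ⟨Bs, rfl, -, -⟩
    exact Finset.card_le_univ Bs
  have hinv : ∀ z, (∀ i ∈ (∅ : Finset (Fin N)), z i = (fun _ : Fin N => false) i) →
      f z = false →
      ∀ Bs : Finset (Finset (Fin N)), (∀ B ∈ Bs, SensitiveBlock f z B) →
        (∀ B ∈ Bs, Disjoint B (∅ : Finset (Fin N))) →
        (Bs : Set (Finset (Fin N))).Pairwise (fun B B' => Disjoint B B') →
        Bs.card ≤ blockSens f := by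
    intro z _ _ Bs hsens _ hpair
    have h1 : Bs.card ≤ bsAt f z := le_csSup (hbddAt z) ⟨Bs, rfl, hsens, hpair⟩
    have h2 : bsAt f z ≤ blockSens f := le_csSup hbddR ⟨z, rfl⟩
    omega
  obtain ⟨T, hdep, hcor⟩ := st8_build f (ndeg f) (fun S => p.coeff (st8ind S)) hq hrepE
    (blockSens f) ∅ (fun _ => false) hinv
  refine Nat.sInf_le ⟨T, ?_, fun x => hcor x (fun i hi => absurd hi (Finset.notMem_empty i))⟩
  exact le_trans hdep (Nat.mul_le_mul_right _ (Nat.le_succ _))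
end

section
/- Querying a maxonomial decreases block sensitivity on a 0-instance: let p nondeterministically represent f, let w be an input with f(w) = 0, and let M be a maxonomial of p. Then bs_w(f restricted by fixing the variables of M according to w) ≤ bs_w(f) − 1; more precisely, the subfunction of f obtained by fixing the M-variables to their values in w has block sensitivity on (the restriction of) w strictly less than bs_w(f). -/
open Finset in
lemma sum_pm {N : ℕ} (S : Finset (Fin N)) (a b : Fin N → ℝ) :
    ∑ B ∈ S.powerset, (-1:ℝ)^B.card * ∏ i ∈ S, (if i ∈ B then b i else a i)
      = ∏ i ∈ S, (a i - b i) := by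
  have h : ∏ i ∈ S, (a i - b i) = ∏ i ∈ S, ((-b i) + a i) :=
    Finset.prod_congr rfl (fun i _ => by ring)
  rw [h, Finset.prod_add]
  refine Finset.sum_congr rfl ?_
  intro t ht
  rw [Finset.mem_powerset] at ht
  have h1 : ∏ i ∈ t, (-b i) = (-1:ℝ)^t.card * ∏ i ∈ t, b i := by
    rw [← Finset.prod_const, ← Finset.prod_mul_distrib]
    exact Finset.prod_congr rfl (fun i _ => by ring)
  have h2 : ∏ i ∈ S, (if i ∈ t then b i else a i)
      = (∏ i ∈ t, b i) * ∏ i ∈ S \ t, a i := by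
    rw [Finset.prod_ite, Finset.filter_mem_eq_inter, Finset.inter_eq_right.2 ht]
    congr 1
    rw [Finset.sdiff_eq_filter]
  rw [h1, h2]; ring

lemma maxonomial_lemma {N : ℕ} (f : (Fin N → Bool) → Bool) (p : MvPolynomial (Fin N) ℝ)
    (hml : Multilinear p) (hrep : NRepresents p f)
    (w : Fin N → Bool) (M : (Fin N) →₀ ℕ) (hM : M ∈ p.support)
    (hmax : (M.sum fun _ e => e) = p.totalDegree) :
    ∃ B ⊆ M.support, f (flipSet w B) = true := by
  classical
  by_contra hc
  push_neg at hc
  set S := M.support with hS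
  set t : Fin N → ℝ := fun i => boolToReal (w i) with ht
  have hM1 : ∀ i ∈ S, M i = 1 := fun i hi =>
    le_antisymm (hml M hM i) (Nat.one_le_iff_ne_zero.2 (Finsupp.mem_support_iff.1 hi))
  have hdegM : (M.sum fun _ e => e) = S.card := by
    rw [Finsupp.sum, Finset.sum_congr rfl hM1]; simp
  have h3 : p.totalDegree = S.card := by rw [← hmax, hdegM]
  -- all flips inside S give 0-inputs
  have hE : ∀ B ∈ S.powerset,
      MvPolynomial.eval (fun i => boolToReal (flipSet w B i)) p = 0 := by
    intro B hB
    exact (hrep _).2 (Bool.eq_false_iff.2 (hc B (Finset.mem_powerset.1 hB)))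
  have hflip : ∀ (B : Finset (Fin N)), B ⊆ S → ∀ i : Fin N,
      boolToReal (flipSet w B i) = if i ∈ B then 1 - t i else t i := by
    intro B _ i
    by_cases h : i ∈ B <;> simp only [flipSet, h, if_true, if_false, ht] <;>
      cases w i <;> simp [boolToReal]
  -- d = M characterization
  have hd_eq : ∀ d ∈ p.support, (∀ i ∈ S, d i ≠ 0) → d = M := by
    intro d hd hall
    have hSsub : S ⊆ d.support := fun i hi => Finsupp.mem_support_iff.2 (hall i hi)
    have h1 : d.support.card ≤ ∑ i ∈ d.support, d i := by
      calc d.support.card = ∑ _i ∈ d.support, 1 := by simp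
        _ ≤ _ := Finset.sum_le_sum (fun i hi =>
            Nat.one_le_iff_ne_zero.2 (Finsupp.mem_support_iff.1 hi))
    have h2 : (∑ i ∈ d.support, d i) ≤ p.totalDegree := MvPolynomial.le_totalDegree hd
    have hcard2 : d.support.card ≤ S.card := by
      calc d.support.card ≤ ∑ i ∈ d.support, d i := h1
        _ ≤ p.totalDegree := h2
        _ = S.card := h3
    have hsupp : S = d.support := Finset.eq_of_subset_of_card_le hSsub hcard2
    have hcard : d.support.card = S.card := by rw [← hsupp]
    have hsum_eq : ∑ i ∈ d.support, d i = d.support.card := by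
      have := h2.trans h3.le
      omega
    have hone : ∀ i ∈ d.support, d i = 1 := by
      by_contra hco
      push_neg at hco
      obtain ⟨j, hj, hj1⟩ := hco
      have hlt : d.support.card < ∑ i ∈ d.support, d i := by
        calc d.support.card = ∑ _i ∈ d.support, 1 := by simp
          _ < _ := Finset.sum_lt_sum
              (fun i hi => Nat.one_le_iff_ne_zero.2 (Finsupp.mem_support_iff.1 hi))
              ⟨j, hj, lt_of_le_of_ne
                (Nat.one_le_iff_ne_zero.2 (Finsupp.mem_support_iff.1 hj)) (Ne.symm hj1)⟩
      omega
    ext i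
    by_cases hi : i ∈ S
    · rw [hone i (hsupp ▸ hi), hM1 i hi]
    · have hd0 : d i = 0 := Finsupp.notMem_support_iff.1 (fun h => hi (by rw [hsupp]; exact h))
      have hM0 : M i = 0 := Finsupp.notMem_support_iff.1 hi
      rw [hd0, hM0]
  -- the main alternating-sum computation
  set C : (Fin N →₀ ℕ) → ℝ := fun d => ∏ i ∈ Sᶜ, t i ^ d i with hC
  have stepA : ∀ B ∈ S.powerset,
      (-1:ℝ)^B.card * MvPolynomial.eval (fun i => boolToReal (flipSet w B i)) p
      = ∑ d ∈ p.support, (MvPolynomial.coeff d p * C d) *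
          ((-1:ℝ)^B.card * ∏ i ∈ S, (if i ∈ B then (1 - t i)^(d i) else (t i)^(d i))) := by
    intro B hB
    have hBS := Finset.mem_powerset.1 hB
    rw [MvPolynomial.eval_eq', Finset.mul_sum]
    refine Finset.sum_congr rfl ?_
    intro d hd
    have hprod : (∏ i, (boolToReal (flipSet w B i)) ^ d i)
        = (∏ i ∈ S, (if i ∈ B then (1 - t i)^(d i) else (t i)^(d i))) * C d := by
      rw [← Finset.prod_mul_prod_compl S (fun i => boolToReal (flipSet w B i) ^ d i)]
      congr 1
      · exact Finset.prod_congr rfl fun i _ => by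
          rw [hflip B hBS i, apply_ite (· ^ d i)]
      · exact Finset.prod_congr rfl fun i hi => by
          rw [hflip B hBS i, if_neg (fun h => (Finset.mem_compl.1 hi) (hBS h))]
    rw [hprod]
    ring
  have sum_eq : ∑ B ∈ S.powerset,
      (-1:ℝ)^B.card * MvPolynomial.eval (fun i => boolToReal (flipSet w B i)) p
      = ∑ d ∈ p.support, (MvPolynomial.coeff d p * C d) *
          ∏ i ∈ S, ((t i)^(d i) - (1 - t i)^(d i)) := by
    rw [Finset.sum_congr rfl stepA, Finset.sum_comm]
    refine Finset.sum_congr rfl fun d _ => ?_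
    rw [← Finset.mul_sum, sum_pm S (fun i => (t i)^(d i)) (fun i => (1 - t i)^(d i))]
  have single : ∑ d ∈ p.support, (MvPolynomial.coeff d p * C d) *
          ∏ i ∈ S, ((t i)^(d i) - (1 - t i)^(d i))
      = MvPolynomial.coeff M p * ∏ i ∈ S, (t i - (1 - t i)) := by
    rw [Finset.sum_eq_single_of_mem M hM]
    · have hCM : C M = 1 := Finset.prod_eq_one fun i hi => by
        rw [Finsupp.notMem_support_iff.1 (Finset.mem_compl.1 hi), pow_zero]
      rw [hCM, mul_one]
      congr 1
      exact Finset.prod_congr rfl fun i hi => by rw [hM1 i hi, pow_one, pow_one]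
    · intro d hd hdM
      have : ∃ j ∈ S, d j = 0 := by
        by_contra hco
        push_neg at hco
        exact hdM (hd_eq d hd hco)
      obtain ⟨j, hjS, hj0⟩ := this
      rw [Finset.prod_eq_zero hjS (by rw [hj0]; simp), mul_zero]
  have lhs0 : ∑ B ∈ S.powerset,
      (-1:ℝ)^B.card * MvPolynomial.eval (fun i => boolToReal (flipSet w B i)) p = 0 := by
    rw [Finset.sum_congr rfl (fun B hB => by rw [hE B hB, mul_zero])]
    simp
  have key : MvPolynomial.coeff M p * ∏ i ∈ S, (t i - (1 - t i)) = 0 := by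
    rw [← single, ← sum_eq, lhs0]
  have hne : MvPolynomial.coeff M p ≠ 0 := MvPolynomial.mem_support_iff.1 hM
  have hprodne : (∏ i ∈ S, (t i - (1 - t i))) ≠ 0 :=
    Finset.prod_ne_zero_iff.2 fun i _ => by
      cases hwi : w i <;> simp [ht, boolToReal, hwi] <;> norm_num
  exact mul_ne_zero hne hprodne key

/-- Querying a maxonomial strictly decreases block sensitivity on a `0`-instance:
the subfunction obtained by fixing the variables of a maximal-degree monomial `M`
to their values in `w` has strictly smaller block sensitivity at `w`. -/
theorem stmt9 (N : ℕ) (f : (Fin N → Bool) → Bool) (p : MvPolynomial (Fin N) ℝ)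
    (hml : Multilinear p) (hrep : NRepresents p f)
    (w : Fin N → Bool) (hw : f w = false)
    (M : (Fin N) →₀ ℕ) (hM : M ∈ p.support)
    (hmax : (M.sum fun _ e => e) = p.totalDegree) :
    bsAt (fun y => f (fun i => if i ∈ M.support then w i else y i)) w < bsAt f w := by
  classical
  set S := M.support with hS
  set g : (Fin N → Bool) → Bool := fun y => f (fun i => if i ∈ S then w i else y i) with hg
  obtain ⟨B₀, hB₀S, hB₀⟩ := maxonomial_lemma f p hml hrep w M hM hmax
  have hflipnil : flipSet w (∅ : Finset (Fin N)) = w := by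
    funext i; simp [flipSet]
  have hgw : g w = f w := by
    have h : (fun i => if i ∈ S then w i else w i) = w := funext fun i => ite_self _
    simp only [hg, h]
  have hrestrict : ∀ B : Finset (Fin N), g (flipSet w B) = g (flipSet w (B \ S)) := by
    intro B
    simp only [hg]
    congr 1
    funext i
    by_cases hi : i ∈ S
    · simp [hi]
    · simp [hi, flipSet, Finset.mem_sdiff]
  have hagree : ∀ B : Finset (Fin N), Disjoint B S → g (flipSet w B) = f (flipSet w B) := by
    intro B hBd
    simp only [hg]
    congr 1
    funext i
    by_cases hi : i ∈ S
    · have hiB : i ∉ B := fun h => (Finset.disjoint_left.1 hBd h) hi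
      simp [hi, flipSet, hiB]
    · simp [hi]
  have hsens : ∀ B, SensitiveBlock g w B → SensitiveBlock f w (B \ S) := by
    intro B hB
    have h1 : g (flipSet w (B \ S)) ≠ g w := by rw [← hrestrict]; exact hB
    rwa [hagree _ Finset.sdiff_disjoint, hgw] at h1
  have hBne : ∀ B, SensitiveBlock g w B → (B \ S).Nonempty := by
    intro B hB
    rcases Finset.eq_empty_or_nonempty (B \ S) with h | h
    · exfalso
      have h1 : g (flipSet w (B \ S)) ≠ g w := by rw [← hrestrict]; exact hB
      rw [h, hflipnil] at h1
      exact h1 rfl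
    · exact h
  -- the sets defining bsAt
  have hbdd : ∀ h : (Fin N → Bool) → Bool, BddAbove {k | ∃ Bs : Finset (Finset (Fin N)),
      Bs.card = k ∧ (∀ B ∈ Bs, SensitiveBlock h w B) ∧
      (Bs : Set (Finset (Fin N))).Pairwise (fun B B' => Disjoint B B')} := by
    intro h
    refine ⟨Fintype.card (Finset (Fin N)), ?_⟩
    rintro k ⟨Bs, rfl, -⟩
    exact le_trans (Finset.card_le_univ Bs) (le_of_eq (Finset.card_univ))
  have hnee : ∀ h : (Fin N → Bool) → Bool, Set.Nonempty {k | ∃ Bs : Finset (Finset (Fin N)),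
      Bs.card = k ∧ (∀ B ∈ Bs, SensitiveBlock h w B) ∧
      (Bs : Set (Finset (Fin N))).Pairwise (fun B B' => Disjoint B B')} :=
    fun h => ⟨0, ∅, by simp, by simp, by simp⟩
  have hmem : bsAt g w ∈ {k | ∃ Bs : Finset (Finset (Fin N)),
      Bs.card = k ∧ (∀ B ∈ Bs, SensitiveBlock g w B) ∧
      (Bs : Set (Finset (Fin N))).Pairwise (fun B B' => Disjoint B B')} :=
    Nat.sSup_mem (hnee g) (hbdd g)
  obtain ⟨Bs, hcard, hsg, hpair⟩ := hmem
  -- new family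
  have hB₀sens : SensitiveBlock f w B₀ := by
    rw [SensitiveBlock, hB₀, hw]; simp
  have hB₀ne : B₀.Nonempty := by
    rcases Finset.eq_empty_or_nonempty B₀ with h | h
    · exfalso; rw [h, hflipnil, hw] at hB₀; exact Bool.noConfusion hB₀
    · exact h
  set Bs' : Finset (Finset (Fin N)) := Bs.image (· \ S) with hBs'
  have hinj : Set.InjOn (· \ S) ↑Bs := by
    intro B hB B' hB' hEq
    by_contra hne
    have hdisj : Disjoint B B' := hpair hB hB' hne
    have h1 : (B \ S).Nonempty := hBne B (hsg B hB)
    have h2 : Disjoint (B \ S) (B' \ S) :=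
      hdisj.mono (Finset.sdiff_subset) (Finset.sdiff_subset)
    have hEq' : B \ S = B' \ S := hEq
    rw [hEq'] at h1 h2
    exact h1.ne_empty (disjoint_self.1 h2)
  have hcard' : Bs'.card = Bs.card := Finset.card_image_of_injOn hinj
  have hB₀notmem : B₀ ∉ Bs' := by
    intro hmem'
    obtain ⟨B, hB, hBeq⟩ := Finset.mem_image.1 hmem'
    obtain ⟨j, hj⟩ := hB₀ne
    have hjS : j ∈ S := hB₀S hj
    rw [← hBeq] at hj
    exact (Finset.mem_sdiff.1 hj).2 hjS
  have hnew : bsAt g w + 1 ∈ {k | ∃ Bs : Finset (Finset (Fin N)),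
      Bs.card = k ∧ (∀ B ∈ Bs, SensitiveBlock f w B) ∧
      (Bs : Set (Finset (Fin N))).Pairwise (fun B B' => Disjoint B B')} := by
    refine ⟨insert B₀ Bs', ?_, ?_, ?_⟩
    · rw [Finset.card_insert_of_notMem hB₀notmem, hcard', hcard]
    · intro B hB
      rcases Finset.mem_insert.1 hB with h | h
      · rw [h]; exact hB₀sens
      · obtain ⟨B', hB', rfl⟩ := Finset.mem_image.1 h
        exact hsens B' (hsg B' hB')
    · intro x hx y hy hxy
      simp only [Finset.coe_insert, Set.mem_insert_iff, Finset.mem_coe] at hx hy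
      have hdis : ∀ z ∈ Bs', Disjoint B₀ z := by
        intro z hz
        obtain ⟨B', _, rfl⟩ := Finset.mem_image.1 hz
        exact (Finset.sdiff_disjoint.mono_right hB₀S).symm
      rcases hx with rfl | hx <;> rcases hy with rfl | hy
      · exact absurd rfl hxy
      · exact hdis y hy
      · exact (hdis x hx).symm
      · obtain ⟨B, hB, rfl⟩ := Finset.mem_image.1 hx
        obtain ⟨B', hB', rfl⟩ := Finset.mem_image.1 hy
        have : B ≠ B' := fun h => hxy (by rw [h])
        exact (hpair hB hB' this).mono Finset.sdiff_subset Finset.sdiff_subset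
  have hle : bsAt g w + 1 ≤ bsAt f w := le_csSup (hbdd f) hnew
  omega
end

section
/- Randomized two-sided error query complexity is at least half the block sensitivity: R_2(f) ≥ bs(f)/2 for every total Boolean function f. -/
/-- A randomized decision tree: a finitely supported probability distribution over
deterministic decision trees. -/
structure RandTree (N : ℕ) where
  m : ℕ
  w : Fin m → ℝ
  nonneg : ∀ i, 0 ≤ w i
  sum_one : ∑ i, w i = 1
  tree : Fin m → DTree N

/-- every tree in the support has depth at most `q` -/
def RandTree.depthLE {N : ℕ} (R : RandTree N) (q : ℕ) : Prop :=
  ∀ i, R.w i ≠ 0 → (R.tree i).depth ≤ q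

noncomputable def RandTree.probOutput {N : ℕ} (R : RandTree N) (x : Fin N → Bool) (b : Bool) : ℝ :=
  ∑ i, if (R.tree i).eval x = b then R.w i else 0

noncomputable def RandTree.probQueries {N : ℕ} (R : RandTree N) (x : Fin N → Bool)
    (B : Finset (Fin N)) : ℝ :=
  ∑ i, if ((R.tree i).queries x ∩ B) ≠ ∅ then R.w i else 0

/-- two-sided bounded error randomized query complexity (success probability ≥ 4/5) -/
noncomputable def R2 {N : ℕ} (f : (Fin N → Bool) → Bool) : ℕ :=
  sInf {q | ∃ R : RandTree N, R.depthLE q ∧ ∀ x, 4/5 ≤ R.probOutput x (f x)}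


section AuxStmt13

lemma DTree.eval_flip {N : ℕ} (T : DTree N) (x : Fin N → Bool) (B : Finset (Fin N))
    (h : T.queries x ∩ B = ∅) :
    T.eval (flipSet x B) = T.eval x := by
  induction T with
  | leaf b => simp [DTree.eval]
  | node i t0 t1 ih0 ih1 =>
    rw [DTree.queries] at h
    have hiB : i ∉ B := by
      intro hi
      have : i ∈ (insert i (if x i then t1.queries x else t0.queries x)) ∩ B :=
        Finset.mem_inter.2 ⟨Finset.mem_insert_self _ _, hi⟩
      rw [h] at this; exact absurd this (Finset.notMem_empty _)
    have hfi : flipSet x B i = x i := by simp [flipSet, hiB]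
    have hsub : (if x i then t1.queries x else t0.queries x) ∩ B = ∅ := by
      refine Finset.eq_empty_of_forall_notMem fun j hj => ?_
      have : j ∈ (insert i (if x i then t1.queries x else t0.queries x)) ∩ B := by
        rw [Finset.mem_inter] at hj ⊢
        exact ⟨Finset.mem_insert_of_mem hj.1, hj.2⟩
      rw [h] at this; exact absurd this (Finset.notMem_empty _)
    rw [DTree.eval, DTree.eval, hfi]
    cases hx : x i with
    | true => rw [hx] at hsub; simp only [if_true] at hsub ⊢; exact ih1 hsub
    | false => rw [hx] at hsub; simp only [if_false, Bool.false_eq_true] at hsub ⊢; exact ih0 hsub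

lemma DTree.card_queries {N : ℕ} (T : DTree N) (x : Fin N → Bool) :
    (T.queries x).card ≤ T.depth := by
  induction T with
  | leaf b => simp [DTree.queries, DTree.depth]
  | node i t0 t1 ih0 ih1 =>
    rw [DTree.queries, DTree.depth]
    refine (Finset.card_insert_le _ _).trans ?_
    cases hx : x i <;> simp only [if_true, if_false, Bool.false_eq_true] <;> omega

lemma filter_card_le_stmt13 {N : ℕ} (Q : Finset (Fin N)) (Bs : Finset (Finset (Fin N)))
    (hd : (Bs : Set (Finset (Fin N))).Pairwise (fun B B' => Disjoint B B')) :
    (Bs.filter (fun B => Q ∩ B ≠ ∅)).card ≤ Q.card := by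
  classical
  set F := Bs.filter (fun B => Q ∩ B ≠ ∅) with hF
  have hdisj : ∀ B ∈ F, ∀ B' ∈ F, B ≠ B' → Disjoint (Q ∩ B) (Q ∩ B') := by
    intro B hB B' hB' hne
    exact Finset.disjoint_of_subset_left Finset.inter_subset_right
      (Finset.disjoint_of_subset_right Finset.inter_subset_right
        (hd (Finset.mem_filter.1 hB).1 (Finset.mem_filter.1 hB').1 hne))
  calc F.card = ∑ _B ∈ F, 1 := by simp
    _ ≤ ∑ B ∈ F, (Q ∩ B).card := by
        refine Finset.sum_le_sum fun B hB => ?_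
        have := (Finset.mem_filter.1 hB).2
        exact Nat.one_le_iff_ne_zero.2 (by simpa [Finset.card_eq_zero] using this)
    _ = (F.biUnion (fun B => Q ∩ B)).card := (Finset.card_biUnion hdisj).symm
    _ ≤ Q.card := Finset.card_le_card (by
        intro j hj
        obtain ⟨B, _, hjB⟩ := Finset.mem_biUnion.1 hj
        exact (Finset.mem_inter.1 hjB).1)

lemma probOutput_add_stmt13 {N : ℕ} (R : RandTree N) (x : Fin N → Bool) (b : Bool) :
    R.probOutput x b + R.probOutput x (!b) = 1 := by
  rw [RandTree.probOutput, RandTree.probOutput, ← Finset.sum_add_distrib, ← R.sum_one]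
  refine Finset.sum_congr rfl fun i _ => ?_
  cases hE : (R.tree i).eval x <;> cases b <;> simp

lemma prob_split_stmt13 {N : ℕ} (R : RandTree N) (x : Fin N → Bool) (B : Finset (Fin N))
    (b : Bool) :
    R.probOutput x b ≤ R.probQueries x B + R.probOutput (flipSet x B) b := by
  rw [RandTree.probOutput, RandTree.probOutput, RandTree.probQueries, ← Finset.sum_add_distrib]
  refine Finset.sum_le_sum fun i _ => ?_
  by_cases hq : (R.tree i).queries x ∩ B = ∅
  · rw [DTree.eval_flip _ _ _ hq, if_neg (not_not_intro hq)]
    simp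
  · rw [if_pos hq]
    have h0 := R.nonneg i
    split <;> split <;> linarith

lemma block_queried_stmt13 {N : ℕ} (f : (Fin N → Bool) → Bool) (R : RandTree N)
    (hcorr : ∀ x, 4/5 ≤ R.probOutput x (f x)) (x : Fin N → Bool) (B : Finset (Fin N))
    (hB : SensitiveBlock f x B) : 1/2 ≤ R.probQueries x B := by
  have h1 := hcorr x
  have h2 := hcorr (flipSet x B)
  have hfx : f x = !(f (flipSet x B)) := by
    cases hc : f (flipSet x B) <;> cases hc' : f x <;> simp_all [SensitiveBlock]
  have h3 := prob_split_stmt13 R x B (f x)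
  have h4 := probOutput_add_stmt13 R (flipSet x B) (f (flipSet x B))
  rw [hfx] at h3 h1
  linarith

lemma sum_probQueries_le_stmt13 {N : ℕ} (R : RandTree N) (q : ℕ) (hdep : R.depthLE q)
    (x : Fin N → Bool) (Bs : Finset (Finset (Fin N)))
    (hd : (Bs : Set (Finset (Fin N))).Pairwise (fun B B' => Disjoint B B')) :
    ∑ B ∈ Bs, R.probQueries x B ≤ q := by
  classical
  simp only [RandTree.probQueries]
  rw [Finset.sum_comm]
  calc ∑ i, ∑ B ∈ Bs, (if ((R.tree i).queries x ∩ B) ≠ ∅ then R.w i else 0)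
      = ∑ i, ((Bs.filter (fun B => (R.tree i).queries x ∩ B ≠ ∅)).card : ℝ) * R.w i := by
        refine Finset.sum_congr rfl fun i _ => ?_
        rw [Finset.sum_ite, Finset.sum_const_zero, add_zero, Finset.sum_const,
          nsmul_eq_mul]
    _ ≤ ∑ i, (q : ℝ) * R.w i := by
        refine Finset.sum_le_sum fun i _ => ?_
        by_cases hw : R.w i = 0
        · simp [hw]
        · refine mul_le_mul_of_nonneg_right ?_ (R.nonneg i)
          exact_mod_cast le_trans (filter_card_le_stmt13 _ _ hd)
            (le_trans (DTree.card_queries _ _) (hdep i hw))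
    _ = q := by rw [← Finset.mul_sum, R.sum_one, mul_one]

def buildT13 {N : ℕ} (f : (Fin N → Bool) → Bool) : List (Fin N) → (Fin N → Bool) → DTree N
  | [], x => .leaf (f x)
  | i :: l, x => .node i (buildT13 f l (Function.update x i false))
      (buildT13 f l (Function.update x i true))

lemma buildT13_eval {N : ℕ} (f : (Fin N → Bool) → Bool) :
    ∀ (L : List (Fin N)) (x0 x : Fin N → Bool),
      (buildT13 f L x0).eval x = f (fun j => if j ∈ L then x j else x0 j) := by
  intro L
  induction L with
  | nil => intro x0 x; simp [buildT13, DTree.eval]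
  | cons i l ih =>
    intro x0 x
    rw [buildT13, DTree.eval]
    by_cases hx : x i
    · rw [if_pos hx, ih]
      congr 1
      funext j
      by_cases hjl : j ∈ l
      · simp [hjl]
      · by_cases hji : j = i
        · subst hji; simp [hjl, hx, Function.update_self]
        · simp [hjl, hji, Function.update_of_ne hji]
    · rw [if_neg hx, ih]
      congr 1
      funext j
      by_cases hjl : j ∈ l
      · simp [hjl]
      · by_cases hji : j = i
        · subst hji
          simp [hjl, Bool.eq_false_iff.mpr hx, Function.update_self]
        · simp [hjl, hji, Function.update_of_ne hji]

lemma buildT13_depth {N : ℕ} (f : (Fin N → Bool) → Bool) :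
    ∀ (L : List (Fin N)) (x0 : Fin N → Bool), (buildT13 f L x0).depth ≤ L.length := by
  intro L
  induction L with
  | nil => intro x0; simp [buildT13, DTree.depth]
  | cons i l ih =>
    intro x0
    rw [buildT13, DTree.depth, List.length_cons]
    have h1 := ih (Function.update x0 i false)
    have h2 := ih (Function.update x0 i true)
    omega

end AuxStmt13

/-- `R_2(f) ≥ bs(f)/2`, i.e. `bs(f) ≤ 2 * R_2(f)`. -/
theorem stmt13 (N : ℕ) (f : (Fin N → Bool) → Bool) :
    blockSens f ≤ 2 * R2 f := by
  classical
  -- the defining set of R2 is nonempty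
  have hne : {q | ∃ R : RandTree N, R.depthLE q ∧ ∀ x, 4/5 ≤ R.probOutput x (f x)}.Nonempty := by
    refine ⟨N, ⟨1, fun _ => 1, fun _ => zero_le_one, by simp,
      fun _ => buildT13 f (List.finRange N) (fun _ => false)⟩, ?_, ?_⟩
    · intro i _
      exact le_trans (buildT13_depth f _ _) (by simp)
    · intro x
      have heval : (buildT13 f (List.finRange N) (fun _ => false)).eval x = f x := by
        rw [buildT13_eval]
        congr 1
        funext j
        simp [List.mem_finRange]
      rw [RandTree.probOutput]
      simp only [heval, if_pos rfl]
      norm_num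
  obtain ⟨R, hdep, hcorr⟩ := Nat.sInf_mem hne
  set q := R2 f with hq
  refine csSup_le (Set.range_nonempty _) ?_
  rintro _ ⟨x, rfl⟩
  refine csSup_le ⟨0, ∅, by simp, by simp, by simp⟩ ?_
  rintro k ⟨Bs, hcard, hsens, hdisj⟩
  have key : (Bs.card : ℝ) * (1/2) ≤ q := by
    calc (Bs.card : ℝ) * (1/2) = ∑ _B ∈ Bs, (1/2 : ℝ) := by
          rw [Finset.sum_const, nsmul_eq_mul]
      _ ≤ ∑ B ∈ Bs, R.probQueries x B :=
          Finset.sum_le_sum fun B hB => block_queried_stmt13 f R hcorr x B (hsens B hB)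
      _ ≤ q := sum_probQueries_le_stmt13 R q hdep x Bs hdisj
  rw [hcard] at key
  have : (k : ℝ) ≤ 2 * q := by linarith
  exact_mod_cast this
end
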